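/- Let α ∈ (−π/4, π/4) and set λ = (cos α − sin α)^{1/3}, μ = (cos α + sin α)^{1/3}. Let θ₀ be the unique angle in (−π/4, π/4) with cos θ₀ = (λ+μ)/√(2(λ²+μ²)) and sin θ₀ = (λ−μ)/√(2(λ²+μ²)), and let f_α(θ) = cos(θ+α) + √(cos(2θ)·cos(2α)). Then the second derivative of f_α at θ₀ equals −(3√2/4)·(λ²+μ²)^{3/2}, which is strictly negative. -/

import Mathlib

open Real

noncomputable section

set_option maxHeartbeats 1000000 in
/-- The second derivative of
`f_α(θ) = cos(θ+α) + √(cos 2θ · cos 2α)` at the critical point `θ₀` equals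
`−(3√2/4)·(λ²+μ²)^{3/2} < 0`, where `λ = (cos α − sin α)^{1/3}`,
`μ = (cos α + sin α)^{1/3}`. -/
theorem second_derivative_at_critical_point
    (α : ℝ) (hα : α ∈ Set.Ioo (-(π / 4)) (π / 4))
    (l m θ₀ : ℝ)
    (hl : l = (Real.cos α - Real.sin α) ^ ((1 : ℝ) / 3))
    (hm : m = (Real.cos α + Real.sin α) ^ ((1 : ℝ) / 3))
    (hθ₀ : θ₀ ∈ Set.Ioo (-(π / 4)) (π / 4))
    (hcos : Real.cos θ₀ = (l + m) / Real.sqrt (2 * (l ^ 2 + m ^ 2)))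
    (hsin : Real.sin θ₀ = (l - m) / Real.sqrt (2 * (l ^ 2 + m ^ 2))) :
    deriv (deriv (fun θ : ℝ =>
        Real.cos (θ + α) + Real.sqrt (Real.cos (2 * θ) * Real.cos (2 * α)))) θ₀ =
      -(3 * Real.sqrt 2 / 4) * (l ^ 2 + m ^ 2) ^ ((3 : ℝ) / 2) ∧
    -(3 * Real.sqrt 2 / 4) * (l ^ 2 + m ^ 2) ^ ((3 : ℝ) / 2) < 0 := by
  obtain ⟨hα1, hα2⟩ := hα
  obtain ⟨hθ1, hθ2⟩ := hθ₀
  have hπ := Real.pi_pos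
  set c : ℝ := Real.cos (2 * α) with hc
  -- basic positivity facts
  have hcpos : 0 < c := Real.cos_pos_of_mem_Ioo ⟨by linarith, by linarith⟩
  have hcosα : 0 < Real.cos α := Real.cos_pos_of_mem_Ioo ⟨by linarith, by linarith⟩
  have hc2' : c = Real.cos α ^ 2 - Real.sin α ^ 2 := Real.cos_two_mul' α
  have hsub : 0 < Real.cos α - Real.sin α := by nlinarith
  have hadd : 0 < Real.cos α + Real.sin α := by nlinarith
  have hlpos : 0 < l := hl ▸ Real.rpow_pos_of_pos hsub _
  have hmpos : 0 < m := hm ▸ Real.rpow_pos_of_pos hadd _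
  have hl3 : l ^ 3 = Real.cos α - Real.sin α := by
    rw [hl, ← Real.rpow_natCast _ 3, ← Real.rpow_mul hsub.le]; norm_num
  have hm3 : m ^ 3 = Real.cos α + Real.sin α := by
    rw [hm, ← Real.rpow_natCast _ 3, ← Real.rpow_mul hadd.le]; norm_num
  set S : ℝ := l ^ 2 + m ^ 2 with hSdef
  have hSpos : 0 < S := by positivity
  set t : ℝ := Real.sqrt (2 * S) with htdef
  have htpos : 0 < t := Real.sqrt_pos.2 (by positivity)
  have ht2 : t ^ 2 = 2 * S := Real.sq_sqrt (by positivity)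
  -- trig values at θ₀
  have hcos2θ : Real.cos (2 * θ₀) = 2 * l * m / S := by
    rw [Real.cos_two_mul', hcos, hsin, div_pow, div_pow, ht2]
    field_simp; ring
  have hsin2θ : Real.sin (2 * θ₀) = (l ^ 2 - m ^ 2) / S := by
    rw [Real.sin_two_mul, hsin, hcos]
    field_simp
    linear_combination (m ^ 2 - l ^ 2) * ht2
  have hcval : c = l ^ 3 * m ^ 3 := by
    rw [hc2']
    linear_combination (-(m ^ 3)) * hl3 + (-(Real.cos α - Real.sin α)) * hm3
  have hcθα : Real.cos (θ₀ + α) = (l ^ 4 + m ^ 4) / t := by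
    have hca : Real.cos α = (l ^ 3 + m ^ 3) / 2 := by rw [hl3, hm3]; ring
    have hsa : Real.sin α = (m ^ 3 - l ^ 3) / 2 := by rw [hl3, hm3]; ring
    rw [Real.cos_add, hcos, hsin, hca, hsa]
    field_simp; ring
  -- positivity of cos(2θ) near θ₀
  have hopen : IsOpen {θ : ℝ | 0 < Real.cos (2 * θ)} := by
    have : Continuous fun θ : ℝ => Real.cos (2 * θ) := by continuity
    exact isOpen_lt continuous_const this
  have hmem : θ₀ ∈ {θ : ℝ | 0 < Real.cos (2 * θ)} := by
    simp only [Set.mem_setOf_eq]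
    exact Real.cos_pos_of_mem_Ioo ⟨by linarith, by linarith⟩
  have hc2θ₀ : 0 < Real.cos (2 * θ₀) := hmem
  -- first derivative
  have hf : ∀ θ : ℝ, 0 < Real.cos (2 * θ) →
      HasDerivAt (fun θ : ℝ => Real.cos (θ + α) + Real.sqrt (Real.cos (2 * θ) * c))
        (-Real.sin (θ + α) + (-Real.sin (2 * θ) * 2 * c) / (2 * Real.sqrt (Real.cos (2 * θ) * c))) θ := by
    intro θ hθ
    have h1 : HasDerivAt (fun θ : ℝ => θ + α) 1 θ := (hasDerivAt_id θ).add_const α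
    have h2 := h1.cos
    have h3 : HasDerivAt (fun θ : ℝ => 2 * θ) 2 θ := by
      simpa using (hasDerivAt_id θ).const_mul 2
    have h4 := (h3.cos.mul_const c).sqrt (mul_pos hθ hcpos).ne'
    have := h2.add h4
    exact this.congr_deriv (by ring)
  have hev : (fun θ : ℝ => -Real.sin (θ + α) + (-Real.sin (2 * θ) * 2 * c) / (2 * Real.sqrt (Real.cos (2 * θ) * c)))
      =ᶠ[nhds θ₀] deriv (fun θ : ℝ => Real.cos (θ + α) + Real.sqrt (Real.cos (2 * θ) * c)) := by
    filter_upwards [hopen.mem_nhds hmem] with θ hθ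
    exact ((hf θ hθ).deriv).symm
  -- second derivative
  have g0 : Real.sqrt (Real.cos (2 * θ₀) * c) = l ^ 2 * m ^ 2 * t / S := by
    rw [hcos2θ, hcval]
    rw [show 2 * l * m / S * (l ^ 3 * m ^ 3) = (l ^ 2 * m ^ 2 * t / S) ^ 2 by
      field_simp
      exact ht2.symm]
    exact Real.sqrt_sq (by positivity)
  have hg0pos : 0 < Real.sqrt (Real.cos (2 * θ₀) * c) := Real.sqrt_pos.2 (mul_pos hc2θ₀ hcpos)
  have hd2 : HasDerivAt (fun θ : ℝ => -Real.sin (θ + α) + (-Real.sin (2 * θ) * 2 * c) / (2 * Real.sqrt (Real.cos (2 * θ) * c)))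
      (-(Real.cos (θ₀ + α) * 1) +
        ((-(Real.cos (2 * θ₀) * 2) * 2 * c * (2 * Real.sqrt (Real.cos (2 * θ₀) * c)) -
          (-Real.sin (2 * θ₀) * 2 * c) * (2 * ((-Real.sin (2 * θ₀) * 2 * c) / (2 * Real.sqrt (Real.cos (2 * θ₀) * c))))) /
          (2 * Real.sqrt (Real.cos (2 * θ₀) * c)) ^ 2)) θ₀ := by
    have h1 : HasDerivAt (fun θ : ℝ => θ + α) 1 θ₀ := (hasDerivAt_id θ₀).add_const α
    have h2 : HasDerivAt (fun θ : ℝ => -Real.sin (θ + α)) (-(Real.cos (θ₀ + α) * 1)) θ₀ := h1.sin.neg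
    have h3 : HasDerivAt (fun θ : ℝ => 2 * θ) 2 θ₀ := by
      simpa using (hasDerivAt_id θ₀).const_mul 2
    have hu : HasDerivAt (fun θ : ℝ => -Real.sin (2 * θ) * 2 * c)
        (-(Real.cos (2 * θ₀) * 2) * 2 * c) θ₀ := (h3.sin.neg.mul_const 2).mul_const c
    have hv : HasDerivAt (fun θ : ℝ => 2 * Real.sqrt (Real.cos (2 * θ) * c))
        (2 * ((-Real.sin (2 * θ₀) * 2 * c) / (2 * Real.sqrt (Real.cos (2 * θ₀) * c)))) θ₀ := by
      exact ((h3.cos.mul_const c).sqrt (mul_pos hc2θ₀ hcpos).ne').const_mul 2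
    exact h2.add (hu.div hv (by exact (mul_pos two_pos hg0pos).ne'))
  constructor
  · have key : deriv (deriv (fun θ : ℝ =>
        Real.cos (θ + α) + Real.sqrt (Real.cos (2 * θ) * c))) θ₀ =
        -(Real.cos (θ₀ + α) * 1) +
        ((-(Real.cos (2 * θ₀) * 2) * 2 * c * (2 * Real.sqrt (Real.cos (2 * θ₀) * c)) -
          (-Real.sin (2 * θ₀) * 2 * c) * (2 * ((-Real.sin (2 * θ₀) * 2 * c) / (2 * Real.sqrt (Real.cos (2 * θ₀) * c))))) /
          (2 * Real.sqrt (Real.cos (2 * θ₀) * c)) ^ 2) := by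
      rw [← hev.deriv_eq]
      exact hd2.deriv
    have hts : t = Real.sqrt 2 * Real.sqrt S := by
      rw [htdef, Real.sqrt_mul (by norm_num : (0:ℝ) ≤ 2)]
    have hrhs : -(3 * Real.sqrt 2 / 4) * S ^ ((3:ℝ)/2) = -(3/4) * S * t := by
      rw [show (3:ℝ)/2 = 1 + 1/2 by norm_num, Real.rpow_add hSpos, Real.rpow_one,
        ← Real.sqrt_eq_rpow, hts]
      ring
    rw [key, g0, hcθα, hcos2θ, hsin2θ, hcval, hrhs]
    have hS0 : S ≠ 0 := hSpos.ne'
    have ht0 : t ≠ 0 := htpos.ne'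
    have hl0 : l ≠ 0 := hlpos.ne'
    have hm0 : m ≠ 0 := hmpos.ne'
    clear_value S t c
    field_simp
    linear_combination
      (-4*(l^4+m^4) - 16*l^2*m^2 + 3*S*(t^2+2*S)) * ht2
      + (12*S*(S + l^2 + m^2)) * hSdef
  · have : 0 < (l ^ 2 + m ^ 2) ^ ((3:ℝ)/2) := Real.rpow_pos_of_pos hSpos _
    nlinarith [Real.sqrt_pos.2 (show (0:ℝ) < 2 by norm_num)]
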